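/- Let ρ : G → Aut(M) be a representation of a finite group on a free ℤ-module of finite rank and let N be a positive integer. Then there exists n ∈ ℕ such that for every m > 0 and every v ∈ M, letting H = {h ∈ G : v − ρ(h)v ∈ N^{n+m}·M}, there exists k ∈ M with ρ(h)k = k for all h ∈ H and v − k ∈ N^m·M. -/

import Mathlib

/-- Decompose a nonzero integer as `e * u` with `e ∣ N ^ n` and `u` coprime to `N`. -/
private lemma decompAux (N : ℕ) : ∀ (K : ℕ) (a : ℤ), a.natAbs ≤ K → a ≠ 0 →
    ∃ (n : ℕ) (e u : ℤ), a = e * u ∧ e ∣ (N : ℤ) ^ n ∧ IsCoprime (N : ℤ) u := by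
  intro K
  induction K with
  | zero =>
    intro a h ha
    exact absurd (Int.natAbs_eq_zero.mp (Nat.le_zero.mp h)) ha
  | succ K ih =>
    intro a h ha
    by_cases hc : IsCoprime (N : ℤ) a
    · exact ⟨0, 1, a, (one_mul a).symm, one_dvd _, hc⟩
    · set g : ℕ := Int.gcd (N : ℤ) a with hg
      have hg0 : g ≠ 0 := by
        intro h0
        exact ha (Int.gcd_eq_zero_iff.mp h0).2
      have hgne1 : g ≠ 1 := fun h1 => hc (Int.isCoprime_iff_gcd_eq_one.mpr (by rw [← hg]; exact h1))
      have hg1 : 1 < g := by omega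
      obtain ⟨a', ha'⟩ : ((g : ℤ)) ∣ a := Int.gcd_dvd_right _ _
      have ha'0 : a' ≠ 0 := by
        rintro rfl
        simp at ha'
        exact ha ha'
      have hlt : a'.natAbs ≤ K := by
        have habs : a.natAbs = g * a'.natAbs := by
          rw [ha', Int.natAbs_mul, Int.natAbs_natCast]
        have h1 : 1 ≤ a'.natAbs := Nat.one_le_iff_ne_zero.mpr (Int.natAbs_ne_zero.mpr ha'0)
        nlinarith [h]
      obtain ⟨n, e, u, heu, he, hu⟩ := ih a' hlt ha'0
      refine ⟨n + 1, (g : ℤ) * e, u, by rw [ha', heu, mul_assoc], ?_, hu⟩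
      have hgN : ((g : ℤ)) ∣ (N : ℤ) := Int.gcd_dvd_left _ _
      calc (g : ℤ) * e ∣ (N : ℤ) * (N : ℤ) ^ n := mul_dvd_mul hgN he
        _ = (N : ℤ) ^ (n + 1) := by ring

private lemma arith (N : ℕ) (a : ℤ) (ha : a ≠ 0) :
    ∃ n : ℕ, ∀ (m : ℕ) (c : ℤ), (N : ℤ) ^ (n + m) ∣ a * c → (N : ℤ) ^ m ∣ c := by
  obtain ⟨n, e, u, heu, he, hu⟩ := decompAux N a.natAbs a le_rfl ha
  refine ⟨n, fun m c hdvd => ?_⟩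
  have he0 : e ≠ 0 := by
    rintro rfl
    simp at heu
    exact ha heu
  have hcop : IsCoprime ((N : ℤ) ^ (n + m)) u := hu.pow_left
  have h1 : (N : ℤ) ^ (n + m) ∣ e * c := by
    apply hcop.dvd_of_dvd_mul_right
    have heq : a * c = e * c * u := by rw [heu]; ring
    rwa [heq] at hdvd
  obtain ⟨s, hs⟩ := he
  obtain ⟨t, ht⟩ := h1
  have heq : e * c = e * (s * (N : ℤ) ^ m * t) := by
    rw [ht, pow_add, hs]; ring
  have hc : c = s * (N : ℤ) ^ m * t := mul_left_cancel₀ he0 heq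
  exact ⟨s * t, by rw [hc]; ring⟩


/-- Key lemma: approximation of almost-kernel elements by kernel elements. -/
private lemma key (M M' : Type*) [AddCommGroup M]
    [AddCommGroup M'] [Module.Free ℤ M'] [Module.Finite ℤ M']
    (f : M →ₗ[ℤ] M') (N : ℕ) :
    ∃ n : ℕ, ∀ (m : ℕ) (v : M), (∃ w : M', f v = ((N : ℤ) ^ (n + m)) • w) →
      ∃ k : M, f k = 0 ∧ ∃ u : M, v - k = ((N : ℤ) ^ m) • u := by
  classical
  let b := Module.Free.chooseBasis ℤ M'
  obtain ⟨r, snf⟩ := (LinearMap.range f).smithNormalForm b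
  have ha : ∀ i, snf.a i ≠ 0 := by
    intro i h
    apply snf.bN.ne_zero i
    apply Subtype.ext
    rw [snf.snf i, h]
    exact zero_smul ℤ _
  choose n₀ hn₀ using fun i => arith N (snf.a i) (ha i)
  set n : ℕ := Finset.univ.sup n₀ with hn
  refine ⟨n, fun m v hw => ?_⟩
  obtain ⟨w, hw⟩ := hw
  have hxR : f v ∈ LinearMap.range f := ⟨v, rfl⟩
  obtain ⟨c, hc⟩ := snf.bN.mem_submodule_iff'.mp hxR
  have h1 : ∀ i, snf.bM.repr (f v) (snf.f i) = snf.a i * c i := by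
    intro i
    have hc2 : f v = ∑ j, (c j * snf.a j) • snf.bM (snf.f j) := by
      rw [hc]
      exact Finset.sum_congr rfl fun j _ => by rw [snf.snf j, smul_smul]
    rw [hc2, map_sum, Finsupp.finset_sum_apply, Finset.sum_eq_single i]
    · simp [Finsupp.single_apply, mul_comm]
    · intro j _ hj
      have : snf.f j ≠ snf.f i := fun hh => hj (snf.f.injective hh)
      simp [Finsupp.single_apply, this]
    · intro hmem
      exact absurd (Finset.mem_univ i) hmem
  have hdvd : ∀ i, (N : ℤ) ^ m ∣ c i := by
    intro i
    have h2 : (N : ℤ) ^ (n + m) ∣ snf.bM.repr (f v) (snf.f i) := by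
      rw [hw]
      simp only [map_smul, Finsupp.smul_apply, smul_eq_mul]
      exact dvd_mul_right _ _
    rw [h1 i] at h2
    have hle : n₀ i ≤ n := Finset.le_sup (Finset.mem_univ i)
    have h3 : (N : ℤ) ^ (n₀ i + (n - n₀ i + m)) ∣ snf.a i * c i := by
      have heq : n₀ i + (n - n₀ i + m) = n + m := by omega
      rwa [heq]
    exact dvd_trans (pow_dvd_pow _ (by omega)) (hn₀ i _ _ h3)
  choose c' hc' using hdvd
  have hY : f v = ((N : ℤ) ^ m) • ∑ i, c' i • ((snf.bN i : M')) := by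
    rw [hc, Finset.smul_sum]
    exact Finset.sum_congr rfl fun i _ => by rw [hc' i, mul_smul]
  have hmemY : (∑ i, c' i • ((snf.bN i : M'))) ∈ LinearMap.range f :=
    Submodule.sum_mem _ fun i _ => Submodule.smul_mem _ _ (snf.bN i).2
  obtain ⟨w', hw'⟩ := hmemY
  refine ⟨v - ((N : ℤ) ^ m) • w', ?_, w', by abel⟩
  rw [map_sub, LinearMap.map_smul, hw', hY, sub_self]

/-- Lemma 4.4. -/
theorem stmt14 (G : Type*) [Group G] [Finite G]
    (M : Type*) [AddCommGroup M] [Module.Free ℤ M] [Module.Finite ℤ M]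
    (ρ : G →* (M ≃ₗ[ℤ] M)) (N : ℕ) (hN : 0 < N) :
    ∃ n : ℕ, ∀ m : ℕ, 0 < m → ∀ v : M, ∃ k : M,
      (∀ h : G, (∃ w : M, v - ρ h v = ((N : ℤ) ^ (n + m)) • w) → ρ h k = k) ∧
      ∃ u : M, v - k = ((N : ℤ) ^ m) • u := by
  classical
  have : Fintype G := Fintype.ofFinite G
  let F : (s : Finset G) → (M →ₗ[ℤ] ({h // h ∈ s} → M)) := fun s =>
    LinearMap.pi fun h : {h // h ∈ s} => LinearMap.id - (ρ (h : G)).toLinearMap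
  choose n₀ hn₀ using fun s : Finset G => key M ({h // h ∈ s} → M) (F s) N
  refine ⟨Finset.univ.sup n₀, fun m _hm v => ?_⟩
  set n : ℕ := Finset.univ.sup n₀ with hn
  set S : Finset G := Finset.univ.filter
    (fun h => ∃ w : M, v - ρ h v = ((N : ℤ) ^ (n + m)) • w) with hS
  have hmem : ∀ h : {h // h ∈ S}, ∃ w : M, v - ρ (h : G) v = ((N : ℤ) ^ (n + m)) • w :=
    fun h => (Finset.mem_filter.mp h.2).2
  choose w₀ hw₀ using hmem
  have hle : n₀ S ≤ n := Finset.le_sup (Finset.mem_univ S)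
  have hfv : F S v = ((N : ℤ) ^ (n₀ S + (n - n₀ S + m))) • w₀ := by
    funext h
    have heq : n₀ S + (n - n₀ S + m) = n + m := by omega
    simp only [F, LinearMap.pi_apply, LinearMap.sub_apply, LinearMap.id_apply,
      LinearEquiv.coe_toLinearMap, Pi.smul_apply, heq]
    exact hw₀ h
  obtain ⟨k, hk0, u, hu⟩ := hn₀ S (n - n₀ S + m) v ⟨w₀, hfv⟩
  refine ⟨k, ?_, ((N : ℤ) ^ (n - n₀ S)) • u, ?_⟩
  · intro h hh
    have hhS : h ∈ S := Finset.mem_filter.mpr ⟨Finset.mem_univ h, hh⟩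
    have hcomp := congrFun hk0 ⟨h, hhS⟩
    simp only [F, LinearMap.pi_apply, LinearMap.sub_apply, LinearMap.id_apply,
      LinearEquiv.coe_toLinearMap, Pi.zero_apply] at hcomp
    exact (sub_eq_zero.mp hcomp).symm
  · rw [smul_smul, ← pow_add, show m + (n - n₀ S) = n - n₀ S + m by omega]
    exact hu
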